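/- Let φ : (1, ∞) → [0, ∞) be continuous and M > 0. Then the function β_{M,φ} : [0, ∞) → [0, ∞) defined by β_{M,φ}(x) = inf{ M^ε x^{1−ε} φ(1/ε) : ε ∈ (0,1) } is continuous on [0, ∞). -/

import Mathlib

noncomputable section

/-- `β_{M,φ}(x) = inf { M^ε x^(1−ε) φ(1/ε) : ε ∈ (0,1) }` (real powers). -/
def yudovichBeta (M : ℝ) (φ : ℝ → ℝ) (x : ℝ) : ℝ :=
  sInf { y | ∃ ε ∈ Set.Ioo (0 : ℝ) 1, y = M ^ ε * x ^ (1 - ε) * φ (1 / ε) }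

section Aux

variable {M : ℝ} {φ : ℝ → ℝ} {x : ℝ}

lemma yudovichSet_nonempty (M : ℝ) (φ : ℝ → ℝ) (x : ℝ) :
    {y | ∃ ε ∈ Set.Ioo (0 : ℝ) 1, y = M ^ ε * x ^ (1 - ε) * φ (1 / ε)}.Nonempty :=
  ⟨_, 1/2, ⟨by norm_num, by norm_num⟩, rfl⟩

lemma one_lt_inv_eps {ε : ℝ} (hε : ε ∈ Set.Ioo (0 : ℝ) 1) : 1 < 1 / ε :=
  (one_lt_div hε.1).2 hε.2

lemma yudovichElem_nonneg (hM : 0 < M) (hφnn : ∀ p ∈ Set.Ioi (1 : ℝ), 0 ≤ φ p)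
    (hx : 0 ≤ x) {ε : ℝ} (hε : ε ∈ Set.Ioo (0 : ℝ) 1) :
    0 ≤ M ^ ε * x ^ (1 - ε) * φ (1 / ε) := by
  have h1 := hφnn _ (one_lt_inv_eps hε)
  have h2 : (0:ℝ) ≤ M ^ ε := Real.rpow_nonneg hM.le ε
  have h3 : (0:ℝ) ≤ x ^ (1 - ε) := Real.rpow_nonneg hx _
  positivity

lemma yudovichSet_bddBelow (hM : 0 < M) (hφnn : ∀ p ∈ Set.Ioi (1 : ℝ), 0 ≤ φ p)
    (hx : 0 ≤ x) :
    BddBelow {y | ∃ ε ∈ Set.Ioo (0 : ℝ) 1, y = M ^ ε * x ^ (1 - ε) * φ (1 / ε)} := by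
  refine ⟨0, fun y hy => ?_⟩
  obtain ⟨ε, hε, rfl⟩ := hy
  exact yudovichElem_nonneg hM hφnn hx hε

lemma yudovichBeta_nonneg (hM : 0 < M) (hφnn : ∀ p ∈ Set.Ioi (1 : ℝ), 0 ≤ φ p)
    (hx : 0 ≤ x) : 0 ≤ yudovichBeta M φ x :=
  le_csInf (yudovichSet_nonempty M φ x) fun y hy => by
    obtain ⟨ε, hε, rfl⟩ := hy
    exact yudovichElem_nonneg hM hφnn hx hε

lemma yudovichBeta_le (hM : 0 < M) (hφnn : ∀ p ∈ Set.Ioi (1 : ℝ), 0 ≤ φ p)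
    (hx : 0 ≤ x) {ε : ℝ} (hε : ε ∈ Set.Ioo (0 : ℝ) 1) :
    yudovichBeta M φ x ≤ M ^ ε * x ^ (1 - ε) * φ (1 / ε) :=
  csInf_le (yudovichSet_bddBelow hM hφnn hx) ⟨ε, hε, rfl⟩

lemma yudovichBeta_concaveOn (hM : 0 < M) (hφnn : ∀ p ∈ Set.Ioi (1 : ℝ), 0 ≤ φ p) :
    ConcaveOn ℝ (Set.Ici 0) (yudovichBeta M φ) := by
  refine ⟨convex_Ici 0, fun x hx y hy a b ha hb hab => ?_⟩
  have hxy : (0:ℝ) ≤ a * x + b * y := by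
    have hx' : (0:ℝ) ≤ x := hx
    have hy' : (0:ℝ) ≤ y := hy
    positivity
  refine le_csInf (yudovichSet_nonempty M φ _) fun z hz => ?_
  obtain ⟨ε, hε, rfl⟩ := hz
  have key : a * x ^ (1 - ε) + b * y ^ (1 - ε) ≤ (a * x + b * y) ^ (1 - ε) := by
    have := (Real.concaveOn_rpow (p := 1 - ε) (by linarith [hε.2]) (by linarith [hε.1])).2
      hx hy ha hb hab
    simpa [smul_eq_mul] using this
  have hc : 0 ≤ M ^ ε * φ (1 / ε) :=
    mul_nonneg (Real.rpow_nonneg hM.le ε) (hφnn _ (one_lt_inv_eps hε))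
  have h1 : yudovichBeta M φ x ≤ M ^ ε * x ^ (1 - ε) * φ (1 / ε) :=
    yudovichBeta_le hM hφnn hx hε
  have h2 : yudovichBeta M φ y ≤ M ^ ε * y ^ (1 - ε) * φ (1 / ε) :=
    yudovichBeta_le hM hφnn hy hε
  calc a • yudovichBeta M φ x + b • yudovichBeta M φ y
      ≤ a * (M ^ ε * x ^ (1 - ε) * φ (1 / ε)) + b * (M ^ ε * y ^ (1 - ε) * φ (1 / ε)) := by
        simpa [smul_eq_mul] using
          add_le_add (mul_le_mul_of_nonneg_left h1 ha) (mul_le_mul_of_nonneg_left h2 hb)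
    _ = (M ^ ε * φ (1 / ε)) * (a * x ^ (1 - ε) + b * y ^ (1 - ε)) := by ring
    _ ≤ (M ^ ε * φ (1 / ε)) * ((a * x + b * y) ^ (1 - ε)) :=
        mul_le_mul_of_nonneg_left key hc
    _ = M ^ ε * (a • x + b • y) ^ (1 - ε) * φ (1 / ε) := by
        simp [smul_eq_mul]; ring

end Aux

/-- For `φ : (1,∞) → [0,∞)` continuous and `M > 0`, `β_{M,φ}` is continuous on `[0,∞)`. -/
theorem yudovichBeta_continuous (M : ℝ) (hM : 0 < M) (φ : ℝ → ℝ)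
    (hφc : ContinuousOn φ (Set.Ioi 1))
    (hφnn : ∀ p ∈ Set.Ioi (1 : ℝ), 0 ≤ φ p) :
    ContinuousOn (yudovichBeta M φ) (Set.Ici 0) := by
  have hcont : ContinuousOn (yudovichBeta M φ) (Set.Ioi 0) := by
    have h := (yudovichBeta_concaveOn hM hφnn).continuousOn_interior
    rwa [interior_Ici] at h
  intro x hx
  rcases eq_or_lt_of_le (Set.mem_Ici.mp hx : (0:ℝ) ≤ x) with rfl | hx'
  · -- continuity at 0 by squeezing
    have hε : (1/2 : ℝ) ∈ Set.Ioo (0:ℝ) 1 := ⟨by norm_num, by norm_num⟩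
    have hub : ∀ y ∈ Set.Ici (0:ℝ),
        yudovichBeta M φ y ≤ M ^ (1/2:ℝ) * y ^ (1 - 1/2 : ℝ) * φ (1 / (1/2:ℝ)) :=
      fun y hy => yudovichBeta_le hM hφnn hy hε
    have hlb : ∀ y ∈ Set.Ici (0:ℝ), 0 ≤ yudovichBeta M φ y :=
      fun y hy => yudovichBeta_nonneg hM hφnn hy
    have hzero : yudovichBeta M φ 0 = 0 := by
      have h1 : yudovichBeta M φ 0 ≤ M ^ (1/2:ℝ) * (0:ℝ) ^ (1 - 1/2 : ℝ) * φ (1 / (1/2:ℝ)) :=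
        yudovichBeta_le hM hφnn le_rfl hε
      have h2 : (0:ℝ) ^ (1 - 1/2 : ℝ) = 0 := by
        rw [Real.zero_rpow]; norm_num
      rw [h2] at h1
      simp only [mul_zero, zero_mul] at h1
      exact le_antisymm h1 (yudovichBeta_nonneg hM hφnn le_rfl)
    rw [ContinuousWithinAt, hzero]
    have htop : Filter.Tendsto (fun y : ℝ => M ^ (1/2:ℝ) * y ^ (1 - 1/2 : ℝ) * φ (1 / (1/2:ℝ)))
        (nhdsWithin 0 (Set.Ici 0)) (nhds 0) := by
      have hpow : Filter.Tendsto (fun y : ℝ => y ^ (1 - 1/2 : ℝ)) (nhds 0)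
          (nhds ((0:ℝ) ^ (1 - 1/2 : ℝ))) :=
        (Real.continuousAt_rpow_const 0 _ (Or.inr (by norm_num))).tendsto
      have h0 : (0:ℝ) ^ (1 - 1/2 : ℝ) = 0 := by rw [Real.zero_rpow]; norm_num
      rw [h0] at hpow
      have := (hpow.const_mul (M ^ (1/2:ℝ))).mul_const (φ (1 / (1/2:ℝ)))
      simpa using this.mono_left nhdsWithin_le_nhds
    refine tendsto_of_tendsto_of_tendsto_of_le_of_le' (g := fun _ => (0:ℝ))
      tendsto_const_nhds htop ?_ ?_
    · exact Filter.eventually_of_mem self_mem_nhdsWithin hlb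
    · exact Filter.eventually_of_mem self_mem_nhdsWithin hub
  · exact ((hcont x hx').continuousAt (Ioi_mem_nhds hx')).continuousWithinAt

end
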